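/- arXiv:2506.09687 — 2 statements merged into one kernel-verified Lean document; each statement's English description precedes it below -/
import Mathlib

section
/- Let 𝒳 ⊂ 𝔽^{n×n} (𝔽 = ℝ or ℂ) be a k-dimensional subspace, Y ∈ 𝔽^{n×n} \ 𝒳, and X_* ∈ 𝒳, and write σ₁ = ‖Y − X_*‖₂. Then X_* is a spectral approximation of Y from 𝒳 if and only if there exist an integer ℓ with 1 ≤ ℓ ≤ k+1 if 𝔽 = ℝ and 1 ≤ ℓ ≤ 2k+1 if 𝔽 = ℂ, unit vectors v_1, …, v_ℓ ∈ Σ_{Y−X_*}, and positive reals ω_1, …, ω_ℓ with ω_1 + … + ω_ℓ = 1, such that Σ_{j=1}^ℓ ω_j u_jᴴ X v_j = 0 for all X ∈ 𝒳, where the u_j are the corresponding maximal left singular vectors, i.e., (Y − X_*) v_j = σ₁ u_j for j = 1, …, ℓ. -/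
open Matrix

variable {𝕜 : Type*} [RCLike 𝕜]

/-- The spectral norm (matrix 2-norm): the supremum of `‖A v‖₂` over unit Euclidean
norm vectors `v`. -/
noncomputable def specNorm {m : Type*} [Fintype m] [DecidableEq m]
    (A : Matrix m m 𝕜) : ℝ :=
  sSup {r : ℝ | ∃ v : EuclideanSpace 𝕜 m, ‖v‖ = 1 ∧ r = ‖Matrix.toEuclideanLin A v‖}

/-- `Xs` is a spectral (best) approximation of `Y` from the subspace `𝒳`. -/
def IsSpectralApprox {m : Type*} [Fintype m] [DecidableEq m]
    (𝒳 : Submodule 𝕜 (Matrix m m 𝕜)) (Y Xs : Matrix m m 𝕜) : Prop :=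
  Xs ∈ 𝒳 ∧ ∀ X ∈ 𝒳, specNorm (Y - Xs) ≤ specNorm (Y - X)

/-- The span of the maximal right singular vectors of `M`. -/
noncomputable def maxRSV {m : Type*} [Fintype m] [DecidableEq m]
    (M : Matrix m m 𝕜) : Submodule 𝕜 (EuclideanSpace 𝕜 m) :=
  Submodule.span 𝕜 {v : EuclideanSpace 𝕜 m | ‖v‖ = 1 ∧ ‖Matrix.toEuclideanLin M v‖ = specNorm M}

/-- The `k`-dimensional field of the `k` matrices `A 0, …, A (k-1)` restricted to
the subspace `S`. -/
def kField {m : Type*} [Fintype m] [DecidableEq m] {k : ℕ}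
    (A : Fin k → Matrix m m 𝕜) (S : Submodule 𝕜 (EuclideanSpace 𝕜 m)) : Set (Fin k → 𝕜) :=
  {w | ∃ v : EuclideanSpace 𝕜 m, v ∈ S ∧ ‖v‖ = 1 ∧
     w = fun i => (inner 𝕜 v (Matrix.toEuclideanLin (A i) v) : 𝕜)}

/-- min-max value -/
noncomputable def minMaxVal {m : Type*} [Fintype m] [DecidableEq m]
    (𝒳 : Submodule 𝕜 (Matrix m m 𝕜)) (Y : Matrix m m 𝕜) : ℝ :=
  sInf {r : ℝ | ∃ X ∈ 𝒳, r = specNorm (Y - X)}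

/-- max-min value -/
noncomputable def maxMinVal {m : Type*} [Fintype m] [DecidableEq m]
    (𝒳 : Submodule 𝕜 (Matrix m m 𝕜)) (Y : Matrix m m 𝕜) : ℝ :=
  sSup {r : ℝ | ∃ v : EuclideanSpace 𝕜 m, ‖v‖ = 1 ∧
    r = sInf {s : ℝ | ∃ X ∈ 𝒳, s = ‖Matrix.toEuclideanLin (Y - X) v‖}}

/-- dual norm of a linear functional w.r.t. the spectral norm -/
noncomputable def dualNorm {m : Type*} [Fintype m] [DecidableEq m]
    (f : Matrix m m 𝕜 →ₗ[𝕜] 𝕜) : ℝ :=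
  sSup {r : ℝ | ∃ A : Matrix m m 𝕜, specNorm A = 1 ∧ r = ‖f A‖}

/-- the rank one matrix `u vᴴ` -/
def outer {m : Type*} (u v : EuclideanSpace 𝕜 m) : Matrix m m 𝕜 :=
  Matrix.of fun i j => u i * star (v j)

/-- nuclear (Schatten 1) norm: the sum of the singular values -/
noncomputable def nuclearNorm {m : Type*} [Fintype m] [DecidableEq m]
    (F : Matrix m m 𝕜) : ℝ :=
  ∑ i, Real.sqrt ((Matrix.isHermitian_conjTranspose_mul_self F).eigenvalues i)

section Helpers

open RCLike

variable {n : ℕ} [NeZero n]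

local notation "E" => EuclideanSpace 𝕜 (Fin n)

/-- the spectral norm is the greatest value of `‖A v‖` over unit vectors. -/
lemma spec_isGreatest (A : Matrix (Fin n) (Fin n) 𝕜) :
    IsGreatest {r : ℝ | ∃ v : E, ‖v‖ = 1 ∧ r = ‖Matrix.toEuclideanLin A v‖} (specNorm A) := by
  have hset : {r : ℝ | ∃ v : E, ‖v‖ = 1 ∧ r = ‖Matrix.toEuclideanLin A v‖}
      = (fun v : E => ‖Matrix.toEuclideanLin A v‖) '' (Metric.sphere 0 1) := by
    ext r
    simp only [Set.mem_setOf_eq, Set.mem_image, mem_sphere_zero_iff_norm]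
    constructor
    · rintro ⟨v, hv, rfl⟩; exact ⟨v, hv, rfl⟩
    · rintro ⟨v, hv, rfl⟩; exact ⟨v, hv, rfl⟩
  have hcont : Continuous fun v : E => ‖Matrix.toEuclideanLin A v‖ :=
    ((Matrix.toEuclideanLin A).continuous_of_finiteDimensional).norm
  have hcomp : IsCompact ((fun v : E => ‖Matrix.toEuclideanLin A v‖) '' (Metric.sphere 0 1)) :=
    (isCompact_sphere (0 : E) 1).image hcont
  have hne : ((fun v : E => ‖Matrix.toEuclideanLin A v‖) '' (Metric.sphere 0 1)).Nonempty := by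
    refine ⟨_, ⟨EuclideanSpace.single (0 : Fin n) (1 : 𝕜), ?_, rfl⟩⟩
    rw [mem_sphere_zero_iff_norm, EuclideanSpace.norm_single, norm_one]
  obtain ⟨x, hx⟩ := hcomp.exists_isGreatest hne
  have : specNorm A = x := by rw [specNorm, hset, hx.csSup_eq]
  rw [this, hset]; exact hx

lemma spec_le (A : Matrix (Fin n) (Fin n) 𝕜) {v : E} (hv : ‖v‖ = 1) :
    ‖Matrix.toEuclideanLin A v‖ ≤ specNorm A :=
  (spec_isGreatest A).2 ⟨v, hv, rfl⟩

lemma spec_exists (A : Matrix (Fin n) (Fin n) 𝕜) :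
    ∃ v : E, ‖v‖ = 1 ∧ ‖Matrix.toEuclideanLin A v‖ = specNorm A := by
  obtain ⟨v, hv, h⟩ := (spec_isGreatest A).1
  exact ⟨v, hv, h.symm⟩

lemma spec_nonneg (A : Matrix (Fin n) (Fin n) 𝕜) : 0 ≤ specNorm A := by
  obtain ⟨v, hv, h⟩ := spec_exists A
  exact h ▸ norm_nonneg _

lemma spec_bound (A : Matrix (Fin n) (Fin n) 𝕜) (v : E) :
    ‖Matrix.toEuclideanLin A v‖ ≤ specNorm A * ‖v‖ := by
  rcases eq_or_ne v 0 with rfl | hv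
  · simp
  · have h1 : ‖((‖v‖ : 𝕜))⁻¹ • v‖ = 1 := norm_smul_inv_norm hv
    have h2 := spec_le A h1
    rw [_root_.map_smul, norm_smul] at h2
    have hvn : (0:ℝ) < ‖v‖ := norm_pos_iff.2 hv
    have : ‖((‖v‖:𝕜))⁻¹‖ = ‖v‖⁻¹ := by
      rw [norm_inv, RCLike.norm_ofReal, abs_of_pos hvn]
    rw [this] at h2
    calc ‖Matrix.toEuclideanLin A v‖ = ‖v‖⁻¹ * ‖Matrix.toEuclideanLin A v‖ * ‖v‖ := by
          field_simp
      _ ≤ specNorm A * ‖v‖ := by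
          apply mul_le_mul_of_nonneg_right h2 hvn.le

end Helpers
section Helpers2

open RCLike

variable {n : ℕ} [NeZero n]

local notation "E" => EuclideanSpace 𝕜 (Fin n)

/-- kernel lemma for positive semidefinite symmetric operators -/
lemma psd_ker (B : E →ₗ[𝕜] E)
    (hsym : ∀ u w : E, (inner 𝕜 u (B w) : 𝕜) = inner 𝕜 (B u) w)
    (hpos : ∀ w : E, 0 ≤ re (inner 𝕜 w (B w) : 𝕜))
    {v : E} (hv : re (inner 𝕜 v (B v) : 𝕜) = 0) : B v = 0 := by
  by_contra hBv
  set a : ℝ := ‖B v‖ ^ 2 with ha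
  have ha0 : 0 < a := by
    rw [ha]; exact pow_pos (norm_pos_iff.2 hBv) 2
  set b : ℝ := re (inner 𝕜 (B v) (B (B v)) : 𝕜) with hb
  set t : ℝ := -a / (|b| + 1) with ht
  have habs : 0 < |b| + 1 := by positivity
  have htneg : t < 0 := by
    rw [ht]; exact div_neg_of_neg_of_pos (by linarith) habs
  have key := hpos (v + (t : 𝕜) • B v)
  have hexp : re (inner 𝕜 (v + (t:𝕜) • B v) (B (v + (t:𝕜) • B v)) : 𝕜)
      = 2 * t * a + t ^ 2 * b := by
    have hmap : B (v + (t:𝕜) • B v) = B v + (t:𝕜) • B (B v) := by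
      rw [map_add, LinearMap.map_smul]
    rw [hmap]
    simp only [inner_add_left, inner_add_right, inner_smul_left, inner_smul_right,
      conj_ofReal, map_add, re_ofReal_mul, hsym v (B v), hv, inner_self_eq_norm_sq]
    rw [ha, hb]; ring
  rw [hexp] at key
  have habs2 : |t * b| ≤ a := by
    rw [abs_mul, ht, abs_div, abs_neg, abs_of_pos ha0, abs_of_pos habs,
      div_mul_eq_mul_div, div_le_iff₀ habs]
    nlinarith [abs_nonneg b]
  have h2 : 0 < 2*a + t*b := by
    have := (abs_le.mp habs2).1
    linarith
  have h3 : t * (2*a + t*b) < 0 := mul_neg_of_neg_of_pos htneg h2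
  nlinarith

end Helpers2
section Helpers3

open RCLike

variable {n : ℕ} [NeZero n]

local notation "E" => EuclideanSpace 𝕜 (Fin n)

/-- every unit vector in `maxRSV M` attains the spectral norm -/
lemma maxRSV_attains (M : Matrix (Fin n) (Fin n) 𝕜) {v : E}
    (hv : v ∈ maxRSV M) (hv1 : ‖v‖ = 1) :
    ‖Matrix.toEuclideanLin M v‖ = specNorm M := by
  set T : E →ₗ[𝕜] E := Matrix.toEuclideanLin M with hT
  set σ : ℝ := specNorm M with hσ
  set B : E →ₗ[𝕜] E := ((σ^2 : ℝ) : 𝕜) • LinearMap.id - (LinearMap.adjoint T).comp T with hB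
  have hBapp : ∀ w : E, B w = ((σ^2 : ℝ) : 𝕜) • w - LinearMap.adjoint T (T w) := by
    intro w; simp [hB]
  have hsym : ∀ u w : E, (inner 𝕜 u (B w) : 𝕜) = inner 𝕜 (B u) w := by
    intro u w
    rw [hBapp, hBapp, inner_sub_right, inner_sub_left, inner_smul_right, inner_smul_left,
      LinearMap.adjoint_inner_right, LinearMap.adjoint_inner_left, conj_ofReal]
  have hre : ∀ w : E, re (inner 𝕜 w (B w) : 𝕜) = σ^2 * ‖w‖^2 - ‖T w‖^2 := by
    intro w
    rw [hBapp, inner_sub_right, inner_smul_right, LinearMap.adjoint_inner_right, map_sub,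
      re_ofReal_mul, inner_self_eq_norm_sq, inner_self_eq_norm_sq]
  have hpos : ∀ w : E, 0 ≤ re (inner 𝕜 w (B w) : 𝕜) := by
    intro w
    rw [hre]
    have h1 : ‖T w‖ ≤ σ * ‖w‖ := spec_bound M w
    nlinarith [norm_nonneg (T w), norm_nonneg w, spec_nonneg (𝕜 := 𝕜) M, mul_nonneg (spec_nonneg (𝕜 := 𝕜) M) (norm_nonneg w)]
  have hker : maxRSV M ≤ LinearMap.ker B := by
    rw [maxRSV, Submodule.span_le]
    rintro w ⟨hw1, hw2⟩
    have : re (inner 𝕜 w (B w) : 𝕜) = 0 := by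
      rw [hre, hw1, hw2]; ring
    exact LinearMap.mem_ker.2 (psd_ker B hsym hpos this)
  have hvk : B v = 0 := LinearMap.mem_ker.1 (hker hv)
  have : re (inner 𝕜 v (B v) : 𝕜) = 0 := by rw [hvk, inner_zero_right, map_zero]
  rw [hre, hv1] at this
  have h2 : ‖T v‖^2 = σ^2 := by nlinarith
  have := spec_nonneg (𝕜 := 𝕜) M
  nlinarith [norm_nonneg (T v), sq_abs (‖T v‖ - σ)]

end Helpers3
section Helpers4

open RCLike

variable {n : ℕ} [NeZero n]

local notation "E" => EuclideanSpace 𝕜 (Fin n)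

lemma backward_dir {k : ℕ} (𝒳 : Submodule 𝕜 (Matrix (Fin n) (Fin n) 𝕜))
    (Y Xs : Matrix (Fin n) (Fin n) 𝕜) (hXs : Xs ∈ 𝒳) {ℓ : ℕ}
    (u v : Fin ℓ → E) (ω : Fin ℓ → ℝ)
    (hmem : ∀ j, v j ∈ maxRSV (Y - Xs)) (hunit : ∀ j, ‖v j‖ = 1)
    (heq : ∀ j, Matrix.toEuclideanLin (Y - Xs) (v j) = specNorm (Y - Xs) • u j)
    (hpos : ∀ j, 0 < ω j) (hsum : ∑ j, ω j = 1)
    (hcert : ∀ X ∈ 𝒳, ∑ j, (ω j : 𝕜) * (inner 𝕜 (u j) (Matrix.toEuclideanLin X (v j)) : 𝕜) = 0) :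
    IsSpectralApprox 𝒳 Y Xs := by
  refine ⟨hXs, fun X hX => ?_⟩
  set σ : ℝ := specNorm (Y - Xs) with hσ
  rcases eq_or_lt_of_le (spec_nonneg (𝕜 := 𝕜) (Y - Xs)) with h0 | hσpos
  · rw [hσ, ← h0]; exact spec_nonneg _
  -- each u j is a unit vector
  have huj : ∀ j, ‖u j‖ = 1 := by
    intro j
    have h1 : ‖Matrix.toEuclideanLin (Y - Xs) (v j)‖ = σ := maxRSV_attains _ (hmem j) (hunit j)
    rw [heq j, norm_smul, Real.norm_eq_abs, abs_of_pos hσpos] at h1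
    exact mul_left_cancel₀ (ne_of_gt hσpos) (by rw [mul_one]; exact h1)
  have hre : ∀ j, re (inner 𝕜 (u j) (Matrix.toEuclideanLin (Y - Xs) (v j)) : 𝕜) = σ := by
    intro j
    rw [heq j, RCLike.real_smul_eq_coe_smul (K := 𝕜), inner_smul_right, re_ofReal_mul,
      inner_self_eq_norm_sq, huj j]
    ring
  have hcert' : ∑ j, ω j * re (inner 𝕜 (u j) (Matrix.toEuclideanLin (X - Xs) (v j)) : 𝕜) = 0 := by
    have := hcert (X - Xs) (Submodule.sub_mem 𝒳 hX hXs)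
    have h2 := congrArg re this
    rw [map_sum] at h2
    simpa only [re_ofReal_mul, map_zero] using h2
  -- split Y - Xs = (Y - X) + (X - Xs)
  have hsplit : ∀ j, re (inner 𝕜 (u j) (Matrix.toEuclideanLin (Y - X) (v j)) : 𝕜)
      = σ - re (inner 𝕜 (u j) (Matrix.toEuclideanLin (X - Xs) (v j)) : 𝕜) := by
    intro j
    have hmat : (Y - X) = (Y - Xs) - (X - Xs) := by abel
    rw [hmat, map_sub, LinearMap.sub_apply, inner_sub_right, map_sub, hre j]
  have key : σ ≤ ∑ j, ω j * re (inner 𝕜 (u j) (Matrix.toEuclideanLin (Y - X) (v j)) : 𝕜) := by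
    have : ∑ j, ω j * re (inner 𝕜 (u j) (Matrix.toEuclideanLin (Y - X) (v j)) : 𝕜)
        = ∑ j, ω j * σ - ∑ j, ω j * re (inner 𝕜 (u j) (Matrix.toEuclideanLin (X - Xs) (v j)) : 𝕜) := by
      rw [← Finset.sum_sub_distrib]
      congr 1; ext j; rw [hsplit j]; ring
    rw [this, hcert', ← Finset.sum_mul, hsum]
    simp
  have bound : ∀ j, ω j * re (inner 𝕜 (u j) (Matrix.toEuclideanLin (Y - X) (v j)) : 𝕜)
      ≤ ω j * specNorm (Y - X) := by
    intro j
    apply mul_le_mul_of_nonneg_left _ (hpos j).le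
    calc re (inner 𝕜 (u j) (Matrix.toEuclideanLin (Y - X) (v j)) : 𝕜)
        ≤ ‖(inner 𝕜 (u j) (Matrix.toEuclideanLin (Y - X) (v j)) : 𝕜)‖ := RCLike.re_le_norm _
      _ ≤ ‖u j‖ * ‖Matrix.toEuclideanLin (Y - X) (v j)‖ := norm_inner_le_norm _ _
      _ = ‖Matrix.toEuclideanLin (Y - X) (v j)‖ := by rw [huj j, one_mul]
      _ ≤ specNorm (Y - X) := spec_le _ (hunit j)
  calc σ ≤ ∑ j, ω j * re (inner 𝕜 (u j) (Matrix.toEuclideanLin (Y - X) (v j)) : 𝕜) := key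
    _ ≤ ∑ j, ω j * specNorm (Y - X) := Finset.sum_le_sum (fun j _ => bound j)
    _ = specNorm (Y - X) := by rw [← Finset.sum_mul, hsum, one_mul]

end Helpers4
section Helpers5

open RCLike

variable {n : ℕ} [NeZero n]

local notation "E" => EuclideanSpace 𝕜 (Fin n)

set_option maxHeartbeats 1000000 in
lemma forward_sep (𝒳 : Submodule 𝕜 (Matrix (Fin n) (Fin n) 𝕜))
    (Y Xs : Matrix (Fin n) (Fin n) 𝕜) (hXs : Xs ∈ 𝒳)
    (hopt : IsSpectralApprox 𝒳 Y Xs)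
    (X' : Matrix (Fin n) (Fin n) 𝕜) (hX' : X' ∈ 𝒳) {ε : ℝ} (hε : 0 < ε)
    (hsep : ∀ v : E, v ∈ maxRSV (Y - Xs) → ‖v‖ = 1 →
      ε ≤ re (inner 𝕜 (Matrix.toEuclideanLin (Y - Xs) v) (Matrix.toEuclideanLin X' v) : 𝕜)) :
    False := by
  set M := Y - Xs with hM
  set T : E →ₗ[𝕜] E := Matrix.toEuclideanLin M with hT
  set T' : E →ₗ[𝕜] E := Matrix.toEuclideanLin X' with hT'
  set σ : ℝ := specNorm M with hσ
  set c : ℝ := specNorm X' with hc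
  have hc0 : 0 ≤ c := spec_nonneg _
  have hσ0 : 0 ≤ σ := spec_nonneg _
  set ψ : E → ℝ := fun v => re (inner 𝕜 (T v) (T' v) : 𝕜) with hψ
  have hψcont : Continuous ψ := by
    apply RCLike.continuous_re.comp
    exact Continuous.inner (T.continuous_of_finiteDimensional) (T'.continuous_of_finiteDimensional)
  set A : Set E := Metric.sphere 0 1 ∩ {v : E | ψ v ≤ ε/2} with hA
  have hAcomp : IsCompact A :=
    (isCompact_sphere (0:E) 1).inter_right (isClosed_le hψcont continuous_const)
  -- bound on A
  obtain ⟨ρ, hρ0, hρσ, hρbd⟩ : ∃ ρ : ℝ, 0 ≤ ρ ∧ ρ < σ ∧ ∀ v ∈ A, ‖T v‖ ≤ ρ := by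
    rcases Set.eq_empty_or_nonempty A with hAe | hAne
    · refine ⟨0, le_refl _, ?_, by simp [hAe]⟩
      -- σ > 0 : there is a maximizer, and on it ψ ≥ ε, so it is not in A; but A empty means...
      -- we get σ > 0 from ε ≤ ψ v₀ ≤ σ * c ... simpler: σ > 0 since maximizer v₀ has ε ≤ ψ v₀
      obtain ⟨v₀, hv₀1, hv₀2⟩ := spec_exists M
      have hv₀m : v₀ ∈ maxRSV M := Submodule.subset_span ⟨hv₀1, hv₀2⟩
      have h1 := hsep v₀ hv₀m hv₀1
      have h2 : ψ v₀ ≤ ‖T v₀‖ * ‖T' v₀‖ :=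
        le_trans (RCLike.re_le_norm _) (norm_inner_le_norm _ _)
      have h3 : ‖T v₀‖ = σ := hv₀2
      have h4 : 0 < ‖T v₀‖ * ‖T' v₀‖ := lt_of_lt_of_le hε (le_trans h1 h2)
      rw [h3] at h4
      rcases (mul_pos_iff.mp h4) with ⟨h5, _⟩ | ⟨h5, h6⟩
      · exact h5
      · exact absurd h6 (not_lt.2 (norm_nonneg _))
    · obtain ⟨x, hx⟩ := (hAcomp.image (T.continuous_of_finiteDimensional.norm)).exists_isGreatest
        (hAne.image _)
      obtain ⟨v₁, hv₁A, hv₁x⟩ := hx.1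
      refine ⟨x, hv₁x ▸ norm_nonneg _, ?_, fun v hv => hx.2 ⟨v, hv, rfl⟩⟩
      have hv₁s : ‖v₁‖ = 1 := mem_sphere_zero_iff_norm.1 hv₁A.1
      have hle : x ≤ σ := hv₁x ▸ spec_le M hv₁s
      rcases lt_or_eq_of_le hle with h | h
      · exact h
      · exfalso
        have hmax : ‖T v₁‖ = σ := by simpa [h] using hv₁x
        have hmem : v₁ ∈ maxRSV M := Submodule.subset_span ⟨hv₁s, hmax⟩
        have := hsep v₁ hmem hv₁s
        have := hv₁A.2
        simp only [Set.mem_setOf_eq] at this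
        linarith [hsep v₁ hmem hv₁s]
  set δ := σ^2 - ρ^2 with hδ
  have hδ0 : 0 < δ := by nlinarith
  set t : ℝ := min 1 (min (ε/(2*(c^2+1))) (δ/(2*(σ*c + c^2 + 1)))) with htdef
  have ht0 : 0 < t := by
    apply lt_min one_pos
    apply lt_min
    · positivity
    · positivity
  have htle1 : t ≤ 1 := min_le_left _ _
  have ht1 : t * c^2 < ε / 2 := by
    have h2 : 0 < 2*(c^2+1) := by positivity
    have h1 : t * (2*(c^2+1)) ≤ ε := by
      rw [← le_div_iff₀ h2]
      exact le_trans (min_le_right _ _) (min_le_left _ _)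
    nlinarith
  have ht2 : t * (2*σ*c + c^2) < δ := by
    have h2 : 0 < 2*(σ*c + c^2 + 1) := by positivity
    have h1 : t * (2*(σ*c + c^2 + 1)) ≤ δ := by
      rw [← le_div_iff₀ h2]
      exact le_trans (min_le_right _ _) (min_le_right _ _)
    have h3 : 0 ≤ σ * c := mul_nonneg hσ0 hc0
    nlinarith
  -- the improved matrix
  set X₂ : Matrix (Fin n) (Fin n) 𝕜 := Xs + (t:𝕜) • X' with hX₂
  have hX₂m : X₂ ∈ 𝒳 := Submodule.add_mem 𝒳 hXs (Submodule.smul_mem 𝒳 _ hX')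
  have hkey : ∀ v : E, ‖v‖ = 1 → ‖Matrix.toEuclideanLin (Y - X₂) v‖^2 < σ^2 := by
    intro v hv
    have hmat : Y - X₂ = M - (t:𝕜) • X' := by rw [hX₂, hM]; abel
    have happ : Matrix.toEuclideanLin (Y - X₂) v = T v - (t:𝕜) • T' v := by
      rw [hmat, map_sub, _root_.map_smul, LinearMap.sub_apply, LinearMap.smul_apply]
    rw [happ]
    have hexp : ‖T v - (t:𝕜) • T' v‖^2 = ‖T v‖^2 - 2*(t * ψ v) + t^2 * ‖T' v‖^2 := by
      calc ‖T v - (t:𝕜) • T' v‖^2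
          = ‖T v‖^2 - 2 * re (inner 𝕜 (T v) ((t:𝕜) • T' v) : 𝕜) + ‖(t:𝕜) • T' v‖^2 :=
            norm_sub_sq (𝕜 := 𝕜) _ _
        _ = ‖T v‖^2 - 2*(t * ψ v) + t^2 * ‖T' v‖^2 := by
            rw [inner_smul_right, re_ofReal_mul, norm_smul, RCLike.norm_ofReal,
              abs_of_pos ht0, mul_pow]
    rw [hexp]
    have h2 : ‖T' v‖ ≤ c := spec_le X' hv
    have h2' : 0 ≤ ‖T' v‖ := norm_nonneg _
    rcases le_or_gt (ψ v) (ε/2) with hψv | hψv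
    · have hvA : v ∈ A := ⟨mem_sphere_zero_iff_norm.2 hv, hψv⟩
      have h1 : ‖T v‖ ≤ ρ := hρbd v hvA
      have h1' : 0 ≤ ‖T v‖ := norm_nonneg _
      have h3 : |ψ v| ≤ σ * c := by
        have := abs_re_le_norm (inner 𝕜 (T v) (T' v) : 𝕜)
        have h4 : ‖(inner 𝕜 (T v) (T' v) : 𝕜)‖ ≤ ‖T v‖ * ‖T' v‖ := norm_inner_le_norm _ _
        have h5 : ‖T v‖ ≤ σ := spec_le M hv
        nlinarith
      have habs := abs_le.mp h3
      have e1 : ‖T v‖^2 ≤ ρ^2 := by nlinarith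
      have e2 : ‖T' v‖^2 ≤ c^2 := by nlinarith
      have e3a : t^2 * ‖T' v‖^2 ≤ t^2 * c^2 := mul_le_mul_of_nonneg_left e2 (sq_nonneg t)
      have e3b : t^2 * c^2 ≤ t * c^2 := by
        nlinarith [mul_nonneg ht0.le (mul_nonneg hc0 hc0)]
      have e4 : -(2*(t*ψ v)) ≤ 2*t*(σ*c) := by
        have := mul_le_mul_of_nonneg_left habs.1 (by linarith : (0:ℝ) ≤ 2*t)
        linarith
      linarith [ht2, hδ0]
    · have h1 : ‖T v‖ ≤ σ := spec_le M hv
      have h1' : 0 ≤ ‖T v‖ := norm_nonneg _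
      have e1 : ‖T v‖^2 ≤ σ^2 := by nlinarith
      have e2 : ‖T' v‖^2 ≤ c^2 := by nlinarith
      have f1 : t^2*‖T' v‖^2 ≤ t^2*c^2 := mul_le_mul_of_nonneg_left e2 (sq_nonneg t)
      have f2 : t^2*c^2 < t*(ε/2) := by nlinarith
      have f3 : t*(ε/2) < 2*(t*ψ v) := by nlinarith
      linarith
  -- conclude
  obtain ⟨v₂, hv₂, hval⟩ := spec_exists (Y - X₂)
  have h5 := hkey v₂ hv₂
  have h6 : specNorm (Y - X₂) < σ := by
    rw [← hval]; exact lt_of_pow_lt_pow_left₀ 2 hσ0 h5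
  have h7 := hopt.2 X₂ hX₂m
  rw [← hM, ← hσ] at h7
  linarith

end Helpers5
section Helpers6

open RCLike

lemma real_lin_repr (φ : 𝕜 →ₗ[ℝ] ℝ) (z : 𝕜) :
    φ z = re ((((φ 1 : ℝ) : 𝕜) - ((φ I : ℝ) : 𝕜) * I) * z) := by
  have hlhs : φ z = re z * φ 1 + im z * φ I := by
    conv_lhs => rw [← re_add_im z]
    rw [RCLike.ofReal_alg (re z), RCLike.ofReal_alg (im z), smul_mul_assoc, one_mul,
      map_add, _root_.map_smul, _root_.map_smul]
    simp [smul_eq_mul]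
  rw [hlhs]
  rw [sub_mul, map_sub, re_ofReal_mul, mul_assoc, re_ofReal_mul]
  have h1 : re ((I : 𝕜) * z) = - (im (I:𝕜) * im z) := by
    rw [RCLike.mul_re, RCLike.I_re]; ring
  rw [h1]
  have h2 : φ I * -(im (I:𝕜) * im z) = - (φ I * im z) := by
    rw [mul_comm (im (I:𝕜)) (im z), RCLike.I_im z]; ring
  rw [h2]
  ring

end Helpers6
section Helpers7

open RCLike

variable {n : ℕ} [NeZero n]

local notation "E" => EuclideanSpace 𝕜 (Fin n)

set_option maxHeartbeats 2000000 in
lemma forward_dir {k : ℕ} (𝒳 : Submodule 𝕜 (Matrix (Fin n) (Fin n) 𝕜))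
    (hdim : Module.finrank 𝕜 𝒳 = k)
    (Y Xs : Matrix (Fin n) (Fin n) 𝕜) (hY : Y ∉ 𝒳) (hXs : Xs ∈ 𝒳)
    (hopt : IsSpectralApprox 𝒳 Y Xs) :
    ∃ ℓ : ℕ, 1 ≤ ℓ ∧ ℓ ≤ Module.finrank ℝ 𝕜 * k + 1 ∧
      ∃ (u v : Fin ℓ → E) (ω : Fin ℓ → ℝ),
        (∀ j, v j ∈ maxRSV (Y - Xs)) ∧ (∀ j, ‖v j‖ = 1) ∧
        (∀ j, Matrix.toEuclideanLin (Y - Xs) (v j) = specNorm (Y - Xs) • u j) ∧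
        (∀ j, 0 < ω j) ∧ (∑ j, ω j = 1) ∧
        (∀ X ∈ 𝒳, ∑ j, (ω j : 𝕜) * (inner 𝕜 (u j) (Matrix.toEuclideanLin X (v j)) : 𝕜) = 0) := by
  set M := Y - Xs with hM
  set T : E →ₗ[𝕜] E := Matrix.toEuclideanLin M with hT
  set σ : ℝ := specNorm M with hσdef
  -- positivity of σ
  have hσpos : 0 < σ := by
    rcases lt_or_eq_of_le (spec_nonneg (𝕜 := 𝕜) M) with h | h
    · exact h
    · exfalso
      have hTz : ∀ v : E, T v = 0 := by
        intro v
        have := spec_bound M v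
        rw [← h, zero_mul] at this
        exact norm_le_zero_iff.1 this
      have hMz : M = 0 := by
        apply Matrix.toEuclideanLin.injective
        rw [map_zero]
        exact LinearMap.ext fun v => hTz v
      exact hY (by rw [sub_eq_zero] at hMz; rw [hMz]; exact hXs)
  -- basis of 𝒳
  haveI : FiniteDimensional 𝕜 ↥𝒳 := FiniteDimensional.finiteDimensional_submodule 𝒳
  let b : Module.Basis (Fin k) 𝕜 ↥𝒳 := (Module.finBasis 𝕜 ↥𝒳).reindex (finCongr hdim)
  let XB : Fin k → Matrix (Fin n) (Fin n) 𝕜 := fun c => (b c : Matrix (Fin n) (Fin n) 𝕜)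
  have hXBmem : ∀ c, XB c ∈ 𝒳 := fun c => (b c).2
  have hXrepr : ∀ X, X ∈ 𝒳 → ∃ d : Fin k → 𝕜, X = ∑ c, d c • XB c := by
    intro X hX
    refine ⟨fun c => b.repr ⟨X, hX⟩ c, ?_⟩
    have h1 := b.sum_repr ⟨X, hX⟩
    have h2 := congrArg (Submodule.subtype 𝒳) h1
    rw [map_sum] at h2
    simp only [Submodule.subtype_apply, Submodule.coe_smul] at h2
    exact h2.symm
  -- geometry
  let g : E → (Fin k → 𝕜) := fun v c => (inner 𝕜 (T v) (Matrix.toEuclideanLin (XB c) v) : 𝕜)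
  have hgcont : Continuous g := by
    apply continuous_pi
    intro c
    exact Continuous.inner (T.continuous_of_finiteDimensional)
      ((Matrix.toEuclideanLin (XB c)).continuous_of_finiteDimensional)
  let SS : Set E := {v : E | v ∈ maxRSV M ∧ ‖v‖ = 1}
  have hSScomp : IsCompact SS := by
    have : SS = (maxRSV M : Set E) ∩ Metric.sphere 0 1 := by
      ext v; simp [SS, mem_sphere_zero_iff_norm, and_comm]
    rw [this]
    exact (isCompact_sphere (0:E) 1).inter_left (Submodule.closed_of_finiteDimensional _)
  have hSSne : SS.Nonempty := by
    obtain ⟨v₀, hv₀1, hv₀2⟩ := spec_exists M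
    exact ⟨v₀, Submodule.subset_span ⟨hv₀1, hv₀2⟩, hv₀1⟩
  set K : Set (Fin k → 𝕜) := g '' SS with hKdef
  have hKcomp : IsCompact K := hSScomp.image hgcont
  have hKne : K.Nonempty := hSSne.image _
  set D := Module.finrank ℝ (Fin k → 𝕜) with hDdef
  have hD : D = Module.finrank ℝ 𝕜 * k := by
    simp [hDdef, Module.finrank_pi_fintype, mul_comm]
  set Φ : (Fin (D+1) → ℝ) × (Fin (D+1) → (Fin k → 𝕜)) → (Fin k → 𝕜) :=
    fun p => ∑ i, p.1 i • p.2 i with hΦdef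
  set S : Set ((Fin (D+1) → ℝ) × (Fin (D+1) → (Fin k → 𝕜))) :=
    (stdSimplex ℝ (Fin (D+1))) ×ˢ (Set.univ.pi fun _ : Fin (D+1) => K) with hSdef
  have hScomp : IsCompact S := IsCompact.prod (isCompact_stdSimplex (𝕜 := ℝ) (ι := Fin (D+1))) (isCompact_univ_pi fun _ => hKcomp)
  have hΦcont : Continuous Φ := by
    apply continuous_finset_sum
    intro i _
    exact ((continuous_apply i).comp continuous_fst).smul ((continuous_apply i).comp continuous_snd)
  have hCcomp : IsCompact (Φ '' S) := hScomp.image hΦcont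
  have hCcl : IsClosed (Φ '' S) := hCcomp.isClosed
  -- C = convexHull K
  have hCsub : Φ '' S ⊆ convexHull ℝ K := by
    rintro x ⟨⟨w, z⟩, ⟨hw, hz⟩, rfl⟩
    exact Convex.sum_mem (convex_convexHull ℝ K) (fun i _ => hw.1 i) hw.2
      (fun i _ => subset_convexHull ℝ K (hz i (Set.mem_univ i)))
  have hsubC : convexHull ℝ K ⊆ Φ '' S := by
    intro x hx
    obtain ⟨ι, hfin, z, w, hzr, hind, hwpos, hwsum, hwz⟩ :=
      eq_pos_convex_span_of_mem_convexHull hx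
    letI := hfin
    have hcard : Fintype.card ι ≤ D + 1 :=
      le_trans hind.card_le_finrank_succ (Nat.add_le_add_right (Submodule.finrank_le _) 1)
    set m := Fintype.card ι with hmdef
    let eqv : ι ≃ Fin m := Fintype.equivFin ι
    let e : (ι ⊕ Fin (D+1-m)) ≃ Fin (D+1) :=
      (eqv.sumCongr (Equiv.refl _)).trans (finSumFinEquiv.trans (finCongr (by omega)))
    obtain ⟨y₀, hy₀⟩ := hKne
    refine ⟨⟨fun j => Sum.elim w (fun _ => 0) (e.symm j),
             fun j => Sum.elim z (fun _ => y₀) (e.symm j)⟩, ⟨⟨?_, ?_⟩, ?_⟩, ?_⟩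
    · intro j
      show (0:ℝ) ≤ Sum.elim w (fun _ => 0) (e.symm j)
      rcases e.symm j with i | i
      · exact (hwpos i).le
      · exact le_rfl
    · calc ∑ j, Sum.elim w (fun _ => 0) (e.symm j)
          = ∑ s : ι ⊕ Fin (D+1-m), Sum.elim w (fun _ => 0) s := Equiv.sum_comp e.symm _
        _ = 1 := by rw [Fintype.sum_sum_type]; simpa using hwsum
    · intro j _
      show Sum.elim z (fun _ => y₀) (e.symm j) ∈ K
      rcases e.symm j with i | i
      · exact hzr ⟨i, rfl⟩
      · exact hy₀
    · show (∑ j, Sum.elim w (fun _ => 0) (e.symm j) • Sum.elim z (fun _ => y₀) (e.symm j)) = x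
      calc ∑ j, (Sum.elim w (fun _ => 0) (e.symm j)) • (Sum.elim z (fun _ => y₀) (e.symm j))
          = ∑ s : ι ⊕ Fin (D+1-m), (Sum.elim w (fun _ => 0) s) • (Sum.elim z (fun _ => y₀) s) :=
            Equiv.sum_comp e.symm (fun s => (Sum.elim w (fun _ => 0) s) • (Sum.elim z (fun _ => y₀) s))
        _ = x := by rw [Fintype.sum_sum_type]; simpa using hwz
  have hCeq : Φ '' S = convexHull ℝ K := Set.Subset.antisymm hCsub hsubC
  -- 0 is in the hull
  have h0 : (0 : Fin k → 𝕜) ∈ Φ '' S := by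
    by_contra h0
    obtain ⟨f, s, hfs, hs0⟩ :=
      _root_.geometric_hahn_banach_closed_point
        (hCeq ▸ convex_convexHull ℝ K) hCcl h0
    rw [map_zero] at hs0
    let φc : Fin k → (𝕜 →ₗ[ℝ] ℝ) := fun c =>
      (f : (Fin k → 𝕜) →ₗ[ℝ] ℝ).comp (LinearMap.single ℝ (fun _ : Fin k => 𝕜) c)
    let γ : Fin k → 𝕜 := fun c => ((φc c 1 : ℝ) : 𝕜) - ((φc c I : ℝ) : 𝕜) * I
    have hfg : ∀ w : Fin k → 𝕜, f w = ∑ c, re (γ c * w c) := by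
      intro w
      have h1 : w = ∑ c, Pi.single c (w c) := (Finset.univ_sum_single w).symm
      calc f w = f (∑ c, Pi.single c (w c)) := by rw [← h1]
        _ = ∑ c, f (Pi.single c (w c)) := by rw [map_sum]
        _ = ∑ c, re (γ c * w c) := by
            refine Finset.sum_congr rfl fun c _ => ?_
            exact real_lin_repr (φc c) (w c)
    let Z : Matrix (Fin n) (Fin n) 𝕜 := ∑ c, γ c • XB c
    have hZmem : Z ∈ 𝒳 := Submodule.sum_mem 𝒳 fun c _ => Submodule.smul_mem 𝒳 _ (hXBmem c)
    have hZv : ∀ v : E, re (inner 𝕜 (T v) (Matrix.toEuclideanLin Z v) : 𝕜) = f (g v) := by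
      intro v
      have h2 : Matrix.toEuclideanLin Z v = ∑ c, γ c • (Matrix.toEuclideanLin (XB c) v) := by
        show Matrix.toEuclideanLin (∑ c, γ c • XB c) v = _
        rw [map_sum, LinearMap.sum_apply]
        refine Finset.sum_congr rfl fun c _ => ?_
        rw [_root_.map_smul, LinearMap.smul_apply]
      rw [h2, inner_sum]
      simp only [inner_smul_right]
      rw [map_sum, hfg (g v)]
    have hsep : ∀ v : E, v ∈ maxRSV M → ‖v‖ = 1 →
        (-s) ≤ re (inner 𝕜 (Matrix.toEuclideanLin M v) (Matrix.toEuclideanLin (-Z) v) : 𝕜) := by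
      intro v hv1 hv2
      have hgv : g v ∈ Φ '' S := by
        rw [hCeq]
        exact subset_convexHull ℝ K ⟨v, ⟨hv1, hv2⟩, rfl⟩
      have h4 := hfs _ hgv
      have h3 : Matrix.toEuclideanLin (-Z) v = - Matrix.toEuclideanLin Z v := by
        rw [map_neg, LinearMap.neg_apply]
      rw [h3, inner_neg_right, map_neg]
      rw [← hT, hZv v]
      linarith
    exact forward_sep 𝒳 Y Xs hXs hopt (-Z) (Submodule.neg_mem 𝒳 hZmem)
      (neg_pos.2 hs0) hsep
  -- unpack
  obtain ⟨⟨w, z⟩, hmemS, hΦ0⟩ := h0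
  obtain ⟨hw, hz⟩ := hmemS
  choose vv hvvS hgvv using fun i => (hz i (Set.mem_univ i))
  have hgvv' : ∀ i, g (vv i) = z i := hgvv
  have hΦ0' : ∑ i, w i • z i = 0 := hΦ0
  have hcoord : ∀ c, ∑ i, ((w i : 𝕜)) *
      (inner 𝕜 (T (vv i)) (Matrix.toEuclideanLin (XB c) (vv i)) : 𝕜) = 0 := by
    intro c
    have h1 := congrFun hΦ0' c
    rw [Finset.sum_apply] at h1
    simp only [Pi.smul_apply, Pi.zero_apply] at h1
    rw [← h1]
    refine Finset.sum_congr rfl fun i _ => ?_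
    rw [← hgvv' i, RCLike.real_smul_eq_coe_mul]
  set t' := Finset.univ.filter (fun i => 0 < w i) with ht'
  have htne : t'.Nonempty := by
    by_contra hne
    rw [Finset.not_nonempty_iff_eq_empty, Finset.filter_eq_empty_iff] at hne
    have hz0 : ∑ i, w i = 0 :=
      Finset.sum_eq_zero fun i _ => le_antisymm (not_lt.1 (hne (Finset.mem_univ i))) (hw.1 i)
    rw [hw.2] at hz0
    exact one_ne_zero hz0
  have hzero : ∀ i ∈ Finset.univ, i ∉ t' → w i = 0 := by
    intro i _ hit
    rw [ht', Finset.mem_filter] at hit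
    have h4 : ¬ 0 < w i := fun hlt => hit ⟨Finset.mem_univ i, hlt⟩
    linarith [hw.1 i]
  have hsum1 : ∑ i ∈ t', w i = 1 := by
    rw [← hw.2]
    exact Finset.sum_subset (Finset.filter_subset _ _) hzero
  have hcoordt : ∀ c, ∑ i ∈ t', (w i:𝕜) *
      (inner 𝕜 (T (vv i)) (Matrix.toEuclideanLin (XB c) (vv i)) : 𝕜) = 0 := by
    intro c
    rw [← hcoord c]
    exact Finset.sum_subset (Finset.filter_subset _ _)
      (fun i hi hit => by rw [hzero i hi hit]; simp)
  set ℓ := t'.card with hℓ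
  let eqv := t'.equivFin
  let idx : Fin ℓ → Fin (D+1) := fun j => ((eqv.symm j : {x // x ∈ t'}) : Fin (D+1))
  have hidx : ∀ j, idx j ∈ t' := fun j => (eqv.symm j).2
  have hsumω : ∑ j : Fin ℓ, w (idx j) = 1 := by
    rw [← hsum1, ← Finset.sum_coe_sort t' w]
    exact Equiv.sum_comp eqv.symm (fun x : {x // x ∈ t'} => w x)
  have hcoordℓ : ∀ c, ∑ j : Fin ℓ, (w (idx j):𝕜) *
      (inner 𝕜 (T (vv (idx j))) (Matrix.toEuclideanLin (XB c) (vv (idx j))) : 𝕜) = 0 := by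
    intro c
    rw [← hcoordt c,
      ← Finset.sum_coe_sort t' (fun i => (w i:𝕜) * (inner 𝕜 (T (vv i)) (Matrix.toEuclideanLin (XB c) (vv i)) : 𝕜))]
    exact Equiv.sum_comp eqv.symm
      (fun x : {x // x ∈ t'} => (w x:𝕜) * (inner 𝕜 (T (vv x)) (Matrix.toEuclideanLin (XB c) (vv x)) : 𝕜))
  refine ⟨ℓ, Finset.card_pos.2 htne, ?_,
    fun j => (σ⁻¹ : ℝ) • T (vv (idx j)), fun j => vv (idx j), fun j => w (idx j),
    fun j => (hvvS (idx j)).1, fun j => (hvvS (idx j)).2, ?_,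
    fun j => (Finset.mem_filter.1 (hidx j)).2, hsumω, ?_⟩
  · have h5 : ℓ ≤ D + 1 := by simpa using Finset.card_le_univ t'
    rw [hD] at h5
    exact h5
  · intro j
    show T (vv (idx j)) = σ • (σ⁻¹ : ℝ) • T (vv (idx j))
    rw [smul_smul, mul_inv_cancel₀ (ne_of_gt hσpos), one_smul]
  · intro X hX
    obtain ⟨d, hd⟩ := hXrepr X hX
    have hXapp : ∀ vX : E, Matrix.toEuclideanLin X vX = ∑ c, d c • Matrix.toEuclideanLin (XB c) vX := by
      intro vX
      rw [hd, map_sum, LinearMap.sum_apply]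
      refine Finset.sum_congr rfl fun c _ => ?_
      rw [_root_.map_smul, LinearMap.smul_apply]
    have key2 : ∑ j : Fin ℓ, (w (idx j):𝕜) *
        (inner 𝕜 (T (vv (idx j))) (Matrix.toEuclideanLin X (vv (idx j))) : 𝕜) = 0 := by
      have hswap : ∑ j : Fin ℓ, (w (idx j):𝕜) *
          (inner 𝕜 (T (vv (idx j))) (Matrix.toEuclideanLin X (vv (idx j))) : 𝕜)
          = ∑ c, d c * (∑ j : Fin ℓ, (w (idx j):𝕜) *
              (inner 𝕜 (T (vv (idx j))) (Matrix.toEuclideanLin (XB c) (vv (idx j))) : 𝕜)) := by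
        calc ∑ j : Fin ℓ, (w (idx j):𝕜) *
            (inner 𝕜 (T (vv (idx j))) (Matrix.toEuclideanLin X (vv (idx j))) : 𝕜)
            = ∑ j : Fin ℓ, ∑ c, d c * ((w (idx j):𝕜) *
                (inner 𝕜 (T (vv (idx j))) (Matrix.toEuclideanLin (XB c) (vv (idx j))) : 𝕜)) := by
              refine Finset.sum_congr rfl fun j _ => ?_
              rw [hXapp, inner_sum, Finset.mul_sum]
              refine Finset.sum_congr rfl fun c _ => ?_
              rw [inner_smul_right]
              ring
          _ = ∑ c, ∑ j : Fin ℓ, d c * ((w (idx j):𝕜) *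
                (inner 𝕜 (T (vv (idx j))) (Matrix.toEuclideanLin (XB c) (vv (idx j))) : 𝕜)) :=
              Finset.sum_comm
          _ = ∑ c, d c * (∑ j : Fin ℓ, (w (idx j):𝕜) *
                (inner 𝕜 (T (vv (idx j))) (Matrix.toEuclideanLin (XB c) (vv (idx j))) : 𝕜)) := by
              refine Finset.sum_congr rfl fun c _ => ?_
              rw [Finset.mul_sum]
      rw [hswap]
      simp only [hcoordℓ, mul_zero, Finset.sum_const_zero]
    have hinner : ∀ j : Fin ℓ, (inner 𝕜 ((σ⁻¹:ℝ) • T (vv (idx j))) (Matrix.toEuclideanLin X (vv (idx j))) : 𝕜)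
        = ((σ⁻¹ : ℝ) : 𝕜) * inner 𝕜 (T (vv (idx j))) (Matrix.toEuclideanLin X (vv (idx j))) := by
      intro j
      rw [RCLike.real_smul_eq_coe_smul (K := 𝕜), inner_smul_left, conj_ofReal]
    calc ∑ j : Fin ℓ, (w (idx j):𝕜) *
          (inner 𝕜 ((σ⁻¹:ℝ) • T (vv (idx j))) (Matrix.toEuclideanLin X (vv (idx j))) : 𝕜)
        = ∑ j : Fin ℓ, ((σ⁻¹:ℝ):𝕜) * ((w (idx j):𝕜) *
            (inner 𝕜 (T (vv (idx j))) (Matrix.toEuclideanLin X (vv (idx j))) : 𝕜)) := by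
          refine Finset.sum_congr rfl fun j _ => ?_
          rw [hinner j]
          ring
      _ = ((σ⁻¹:ℝ):𝕜) * ∑ j : Fin ℓ, (w (idx j):𝕜) *
            (inner 𝕜 (T (vv (idx j))) (Matrix.toEuclideanLin X (vv (idx j))) : 𝕜) :=
          (Finset.mul_sum _ _ _).symm
      _ = 0 := by rw [key2, mul_zero]

end Helpers7

theorem stmt3 {n k : ℕ} (𝒳 : Submodule 𝕜 (Matrix (Fin n) (Fin n) 𝕜))
    (hdim : Module.finrank 𝕜 𝒳 = k)
    (Y Xs : Matrix (Fin n) (Fin n) 𝕜) (hY : Y ∉ 𝒳) (hXs : Xs ∈ 𝒳) :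
    IsSpectralApprox 𝒳 Y Xs ↔
      ∃ ℓ : ℕ, 1 ≤ ℓ ∧ ℓ ≤ Module.finrank ℝ 𝕜 * k + 1 ∧
        ∃ (u v : Fin ℓ → EuclideanSpace 𝕜 (Fin n)) (ω : Fin ℓ → ℝ),
          (∀ j, v j ∈ maxRSV (Y - Xs)) ∧ (∀ j, ‖v j‖ = 1) ∧
          (∀ j, Matrix.toEuclideanLin (Y - Xs) (v j) = specNorm (Y - Xs) • u j) ∧
          (∀ j, 0 < ω j) ∧ (∑ j, ω j = 1) ∧
          (∀ X ∈ 𝒳, ∑ j, (ω j : 𝕜) * (inner 𝕜 (u j) (Matrix.toEuclideanLin X (v j)) : 𝕜) = 0) := by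
  rcases Nat.eq_zero_or_pos n with hn | hn
  · subst hn
    exfalso
    apply hY
    have hY0 : Y = 0 := by
      ext i j
      exact i.elim0
    rw [hY0]
    exact 𝒳.zero_mem
  · haveI : NeZero n := ⟨hn.ne'⟩
    constructor
    · exact forward_dir 𝒳 hdim Y Xs hY hXs
    · rintro ⟨ℓ, -, -, u, v, ω, h1, h2, h3, h4, h5, h6⟩
      exact backward_dir (k := k) 𝒳 Y Xs hXs u v ω h1 h2 h3 h4 h5 h6
end

section
/- Let 𝒳 = span{X_1, …, X_k} ⊂ 𝔽^{n×n} (𝔽 = ℝ or ℂ) be a k-dimensional subspace, Y ∈ 𝔽^{n×n} \ 𝒳, and X_* ∈ 𝒳. Define A_i = (Y − X_*)ᴴ X_i for i = 1, …, k, A_Y = (Y − X_*)ᴴ Y, and ϱ = ‖Y − X_*‖₂². Then the zero vector of 𝔽^k lies in the convex hull of 𝓕(A_1, …, A_k; Σ_{Y−X_*}) if and only if ϱ·e_1 lies in the convex hull of 𝓕(A_Y, A_1, …, A_k), where e_1 is the first standard basis vector of 𝔽^{k+1}. -/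
open Matrix

variable {𝕜 : Type*} [RCLike 𝕜]

section Helpers

open scoped ComplexOrder

variable {n : ℕ}

local notation "⟪" x ", " y "⟫" => @inner 𝕜 _ _ x y

lemma specNorm_bddAbove (M : Matrix (Fin n) (Fin n) 𝕜) :
    BddAbove {r : ℝ | ∃ v : EuclideanSpace 𝕜 (Fin n), ‖v‖ = 1 ∧ r = ‖Matrix.toEuclideanLin M v‖} := by
  refine ⟨‖(Matrix.toEuclideanLin M).toContinuousLinearMap‖, ?_⟩
  rintro r ⟨v, hv, rfl⟩
  calc ‖Matrix.toEuclideanLin M v‖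
      = ‖(Matrix.toEuclideanLin M).toContinuousLinearMap v‖ := rfl
    _ ≤ ‖(Matrix.toEuclideanLin M).toContinuousLinearMap‖ * ‖v‖ :=
        ContinuousLinearMap.le_opNorm _ _
    _ = ‖(Matrix.toEuclideanLin M).toContinuousLinearMap‖ := by rw [hv, mul_one]

lemma norm_toEuclideanLin_le (M : Matrix (Fin n) (Fin n) 𝕜) {v : EuclideanSpace 𝕜 (Fin n)}
    (hv : ‖v‖ = 1) : ‖Matrix.toEuclideanLin M v‖ ≤ specNorm M :=
  le_csSup (specNorm_bddAbove M) ⟨v, hv, rfl⟩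

lemma specNorm_nonneg (hn : 0 < n) (M : Matrix (Fin n) (Fin n) 𝕜) : 0 ≤ specNorm M := by
  have hv : ‖(EuclideanSpace.single (⟨0, hn⟩ : Fin n) (1:𝕜) : EuclideanSpace 𝕜 (Fin n))‖ = 1 := by
    simp
  exact le_trans (norm_nonneg _) (norm_toEuclideanLin_le M hv)

lemma norm_toEuclideanLin_le' (hn : 0 < n) (M : Matrix (Fin n) (Fin n) 𝕜)
    (v : EuclideanSpace 𝕜 (Fin n)) :
    ‖Matrix.toEuclideanLin M v‖ ≤ specNorm M * ‖v‖ := by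
  rcases eq_or_ne v 0 with rfl | hv
  · simp
  · have hnv : ‖v‖ ≠ 0 := norm_ne_zero_iff.mpr hv
    have h1 : ‖(((‖v‖ : 𝕜))⁻¹ • v : EuclideanSpace 𝕜 (Fin n))‖ = 1 := by
      rw [norm_smul, norm_inv, RCLike.norm_ofReal, abs_norm, inv_mul_cancel₀ hnv]
    have := norm_toEuclideanLin_le M h1
    rw [_root_.map_smul, norm_smul, norm_inv, RCLike.norm_ofReal, abs_norm] at this
    have := mul_le_mul_of_nonneg_left this (norm_nonneg v)
    rw [mul_inv_cancel_left₀ hnv] at this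
    linarith [this]

lemma toEuclideanLin_mul (A B : Matrix (Fin n) (Fin n) 𝕜) (v : EuclideanSpace 𝕜 (Fin n)) :
    Matrix.toEuclideanLin (A * B) v = Matrix.toEuclideanLin A (Matrix.toEuclideanLin B v) := by
  simp [Matrix.toEuclideanLin_apply, Matrix.mulVec_mulVec]

lemma inner_conjTranspose_mul (A B : Matrix (Fin n) (Fin n) 𝕜) (v w : EuclideanSpace 𝕜 (Fin n)) :
    ⟪v, Matrix.toEuclideanLin (Aᴴ * B) w⟫ =
      ⟪Matrix.toEuclideanLin A v, Matrix.toEuclideanLin B w⟫ := by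
  rw [toEuclideanLin_mul, Matrix.toEuclideanLin_conjTranspose_eq_adjoint,
    LinearMap.adjoint_inner_right]

lemma inner_conjTranspose_mul_self (A : Matrix (Fin n) (Fin n) 𝕜) (v : EuclideanSpace 𝕜 (Fin n)) :
    ⟪v, Matrix.toEuclideanLin (Aᴴ * A) v⟫ = ((‖Matrix.toEuclideanLin A v‖ : 𝕜))^2 := by
  rw [inner_conjTranspose_mul, inner_self_eq_norm_sq_to_K]

lemma inner_specB (M : Matrix (Fin n) (Fin n) 𝕜) (v : EuclideanSpace 𝕜 (Fin n)) :
    ⟪v, Matrix.toEuclideanLin (((specNorm M ^ 2 : ℝ) : 𝕜) • (1 : Matrix (Fin n) (Fin n) 𝕜)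
        - Mᴴ * M) v⟫
      = ((specNorm M ^2 * ‖v‖^2 - ‖Matrix.toEuclideanLin M v‖^2 : ℝ) : 𝕜) := by
  have hone : Matrix.toEuclideanLin (1 : Matrix (Fin n) (Fin n) 𝕜) v = v := by
    simp [Matrix.toEuclideanLin_apply]
  rw [map_sub, LinearMap.sub_apply, inner_sub_right, _root_.map_smul, LinearMap.smul_apply,
    hone, inner_smul_right, inner_self_eq_norm_sq_to_K, inner_conjTranspose_mul_self]
  push_cast
  ring

lemma maxRSV_le_ker (M : Matrix (Fin n) (Fin n) 𝕜)
    (hb : ∀ v : EuclideanSpace 𝕜 (Fin n), ‖Matrix.toEuclideanLin M v‖ ≤ specNorm M * ‖v‖) :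
    maxRSV M ≤ LinearMap.ker (Matrix.toEuclideanLin
      (((specNorm M ^ 2 : ℝ) : 𝕜) • (1 : Matrix (Fin n) (Fin n) 𝕜) - Mᴴ * M)) := by
  set B := ((specNorm M ^ 2 : ℝ) : 𝕜) • (1 : Matrix (Fin n) (Fin n) 𝕜) - Mᴴ * M with hB
  have hpsd : Matrix.PosSemidef B := by
    refine Matrix.PosSemidef.of_dotProduct_mulVec_nonneg ?_ ?_
    · unfold Matrix.IsHermitian
      simp [hB, Matrix.conjTranspose_smul, Matrix.conjTranspose_mul, RCLike.conj_ofReal]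
    · intro x
      set v : EuclideanSpace 𝕜 (Fin n) := (WithLp.equiv 2 (Fin n → 𝕜)).symm x with hv
      have h0 : star x ⬝ᵥ (B *ᵥ x) = ⟪v, Matrix.toEuclideanLin B v⟫ := by
        rw [dotProduct_comm]; rfl
      rw [h0, hB, inner_specB]
      have hr : (0:ℝ) ≤ specNorm M ^2 * ‖v‖^2 - ‖Matrix.toEuclideanLin M v‖^2 := by
        have := hb v
        nlinarith [norm_nonneg (Matrix.toEuclideanLin M v)]
      exact_mod_cast hr
  apply Submodule.span_le.mpr
  rintro w ⟨hw1, hw2⟩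
  have h0 : star (WithLp.equiv 2 (Fin n → 𝕜) w) ⬝ᵥ (B *ᵥ (WithLp.equiv 2 (Fin n → 𝕜) w))
      = ⟪w, Matrix.toEuclideanLin B w⟫ := by
    rw [dotProduct_comm]; rfl
  have hz : ⟪w, Matrix.toEuclideanLin B w⟫ = 0 := by
    rw [hB, inner_specB, hw1, hw2]
    push_cast
    ring_nf
  have := (hpsd.dotProduct_mulVec_zero_iff (WithLp.equiv 2 (Fin n → 𝕜) w)).mp (by rw [h0, hz])
  simp only [SetLike.mem_coe, LinearMap.mem_ker]
  have h2 : Matrix.toEuclideanLin B w = (WithLp.equiv 2 (Fin n → 𝕜)).symm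
      (B *ᵥ (WithLp.equiv 2 (Fin n → 𝕜) w)) := rfl
  rw [h2]
  simp_all

lemma norm_sq_of_mem_maxRSV (M : Matrix (Fin n) (Fin n) 𝕜)
    (hb : ∀ v : EuclideanSpace 𝕜 (Fin n), ‖Matrix.toEuclideanLin M v‖ ≤ specNorm M * ‖v‖)
    {v : EuclideanSpace 𝕜 (Fin n)} (hv : v ∈ maxRSV M) (h1 : ‖v‖ = 1) :
    ‖Matrix.toEuclideanLin M v‖^2 = specNorm M ^ 2 := by
  have hker := maxRSV_le_ker M hb hv
  rw [LinearMap.mem_ker] at hker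
  have h0 : ⟪v, Matrix.toEuclideanLin (((specNorm M ^ 2 : ℝ) : 𝕜) •
      (1 : Matrix (Fin n) (Fin n) 𝕜) - Mᴴ * M) v⟫ = 0 := by rw [hker, inner_zero_right]
  rw [inner_specB, h1] at h0
  have h2 : (specNorm M ^2 * 1^2 - ‖Matrix.toEuclideanLin M v‖^2 : ℝ) = 0 := by
    exact_mod_cast h0
  nlinarith [h2]

end Helpers

set_option maxHeartbeats 1000000 in
theorem stmt6 {n k : ℕ} (X : Fin k → Matrix (Fin n) (Fin n) 𝕜)
    (hdim : Module.finrank 𝕜 (Submodule.span 𝕜 (Set.range X)) = k)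
    (Y Xs : Matrix (Fin n) (Fin n) 𝕜)
    (hY : Y ∉ Submodule.span 𝕜 (Set.range X))
    (hXs : Xs ∈ Submodule.span 𝕜 (Set.range X)) :
    ((0 : Fin k → 𝕜) ∈
        convexHull ℝ (kField (fun i => (Y - Xs)ᴴ * X i) (maxRSV (Y - Xs)))) ↔
      (fun i : Fin (k + 1) => if i = 0 then ((specNorm (Y - Xs) ^ 2 : ℝ) : 𝕜) else 0) ∈
        convexHull ℝ (kField (Fin.cons ((Y - Xs)ᴴ * Y) (fun i => (Y - Xs)ᴴ * X i)) ⊤) :=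
  by
  classical
  set M := Y - Xs with hM
  have hn : 0 < n := by
    rcases Nat.eq_zero_or_pos n with h0 | h
    · exfalso
      apply hY
      subst h0
      have hY0 : Y = 0 := funext fun i => i.elim0
      rw [hY0]
      exact Submodule.zero_mem _
    · exact h
  have hσ0 : 0 ≤ specNorm M := specNorm_nonneg hn M
  have hb : ∀ v : EuclideanSpace 𝕜 (Fin n), ‖Matrix.toEuclideanLin M v‖ ≤ specNorm M * ‖v‖ :=
    norm_toEuclideanLin_le' hn M
  obtain ⟨c, hc⟩ := (Submodule.mem_span_range_iff_exists_fun 𝕜).mp hXs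
  set K : 𝕜 := ((specNorm M ^ 2 : ℝ) : 𝕜) with hK
  have hdec : Mᴴ * Y = Mᴴ * M + ∑ q, c q • (Mᴴ * X q) := by
    have hY' : Y = M + Xs := by rw [hM]; abel
    calc Mᴴ * Y = Mᴴ * M + Mᴴ * Xs := by rw [hY', Matrix.mul_add]
      _ = Mᴴ * M + ∑ q, c q • (Mᴴ * X q) := by
          rw [← hc, Finset.mul_sum]
          congr 1
          exact Finset.sum_congr rfl fun q _ => Matrix.mul_smul _ _ _
  have hAy : ∀ v : EuclideanSpace 𝕜 (Fin n),
      (inner 𝕜 v (Matrix.toEuclideanLin (Mᴴ * Y) v) : 𝕜)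
        = ((‖Matrix.toEuclideanLin M v‖ ^ 2 : ℝ) : 𝕜)
          + ∑ q, c q * (inner 𝕜 v (Matrix.toEuclideanLin (Mᴴ * X q) v) : 𝕜) := by
    intro v
    rw [hdec, map_add, LinearMap.add_apply, inner_add_right, inner_conjTranspose_mul_self,
      map_sum, LinearMap.sum_apply, inner_sum]
    push_cast
    refine congrArg₂ (· + ·) rfl (Finset.sum_congr rfl fun q _ => ?_)
    rw [_root_.map_smul, LinearMap.smul_apply, inner_smul_right]
  constructor
  · -- forward
    intro h0
    rw [convexHull_eq] at h0
    obtain ⟨ι, t, w, z, hw0, hw1, hz, hcm⟩ := h0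
    rw [Finset.centerMass_eq_of_sum_1 _ _ hw1] at hcm
    have hcoord : ∀ q : Fin k, ∑ j ∈ t, w j • z j q = 0 := by
      intro q
      have := congrFun hcm q
      simpa [Finset.sum_apply] using this
    have hch : ∀ j : {x // x ∈ t}, ∃ v : EuclideanSpace 𝕜 (Fin n),
        v ∈ maxRSV M ∧ ‖v‖ = 1 ∧
          z j.1 = fun i => (inner 𝕜 v (Matrix.toEuclideanLin (Mᴴ * X i) v) : 𝕜) :=
      fun j => hz j.1 j.2
    choose v hv1 hv2 hv3 using hch
    have hF0 : ∀ j : {x // x ∈ t},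
        (inner 𝕜 (v j) (Matrix.toEuclideanLin (Mᴴ * Y) (v j)) : 𝕜) = K + ∑ q, c q * z j.1 q := by
      intro j
      rw [hAy (v j), norm_sq_of_mem_maxRSV M hb (hv1 j) (hv2 j)]
      congr 1
      exact Finset.sum_congr rfl fun q _ => by rw [hv3 j]
    have key : ∀ j ∈ t.attach,
        (fun i : Fin (k+1) => (inner 𝕜 (v j) (Matrix.toEuclideanLin
            ((Fin.cons (Mᴴ * Y) (fun i => Mᴴ * X i) : Fin (k+1) → Matrix (Fin n) (Fin n) 𝕜) i) (v j)) : 𝕜))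
          ∈ kField (Fin.cons (Mᴴ * Y) fun i => Mᴴ * X i)
              (⊤ : Submodule 𝕜 (EuclideanSpace 𝕜 (Fin n))) :=
      fun j _ => ⟨v j, Submodule.mem_top, hv2 j, rfl⟩
    have hmem := Finset.centerMass_mem_convexHull t.attach
      (fun j _ => hw0 j.1 j.2) (by rw [Finset.sum_attach t w, hw1]; norm_num) key
    rw [Finset.centerMass_eq_of_sum_1 _ _ (by rw [Finset.sum_attach t w]; exact hw1)] at hmem
    have heq : (fun i : Fin (k + 1) => if i = 0 then K else (0:𝕜))
        = ∑ j ∈ t.attach, (fun j' : {x // x ∈ t} => w j'.1) j •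
            (fun i : Fin (k+1) => (inner 𝕜 (v j) (Matrix.toEuclideanLin
              ((Fin.cons (Mᴴ * Y) (fun i => Mᴴ * X i) : Fin (k+1) → Matrix (Fin n) (Fin n) 𝕜) i) (v j)) : 𝕜)) := by
      funext i
      rw [Finset.sum_apply]
      induction i using Fin.cases with
      | zero =>
        simp only [Pi.smul_apply, Fin.cons_zero, if_pos rfl]
        symm
        calc ∑ j ∈ t.attach, w j.1 • (inner 𝕜 (v j) (Matrix.toEuclideanLin (Mᴴ * Y) (v j)) : 𝕜)
            = ∑ j ∈ t.attach, w j.1 • (K + ∑ q, c q * z j.1 q) :=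
              Finset.sum_congr rfl fun j _ => by rw [hF0 j]
          _ = ∑ j ∈ t.attach, (w j.1 • K + ∑ q, w j.1 • (c q * z j.1 q)) :=
              Finset.sum_congr rfl fun j _ => by rw [smul_add, Finset.smul_sum]
          _ = (∑ j ∈ t.attach, w j.1 • K) + ∑ j ∈ t.attach, ∑ q, w j.1 • (c q * z j.1 q) :=
              Finset.sum_add_distrib
          _ = K := by
              rw [← Finset.sum_smul, Finset.sum_attach t w, hw1, one_smul, Finset.sum_comm]
              have hz0 : ∀ q : Fin k, ∑ j ∈ t.attach, w j.1 • (c q * z j.1 q) = 0 := by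
                intro q
                have e : ∑ j ∈ t.attach, w j.1 • (c q * z j.1 q)
                    = c q * ∑ j ∈ t.attach, w j.1 • z j.1 q := by
                  rw [Finset.mul_sum]
                  refine Finset.sum_congr rfl fun j _ => ?_
                  rw [RCLike.real_smul_eq_coe_mul, RCLike.real_smul_eq_coe_mul]
                  ring
                rw [e, Finset.sum_attach t (fun j => w j • z j q), hcoord q, mul_zero]
              rw [Finset.sum_congr rfl fun q _ => hz0 q, Finset.sum_const_zero, add_zero]
      | succ q =>
        simp only [Pi.smul_apply, Fin.cons_succ, if_neg (Fin.succ_ne_zero q)]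
        symm
        calc ∑ j ∈ t.attach, w j.1 • (inner 𝕜 (v j) (Matrix.toEuclideanLin (Mᴴ * X q) (v j)) : 𝕜)
            = ∑ j ∈ t.attach, w j.1 • z j.1 q :=
              Finset.sum_congr rfl fun j _ => by rw [hv3 j]
          _ = 0 := by rw [Finset.sum_attach t (fun j => w j • z j q), hcoord q]
    rw [hK] at heq
    rw [heq]
    exact hmem
  · -- reverse
    intro h0
    rw [convexHull_eq] at h0
    obtain ⟨ι, t, w, z, hw0, hw1, hz, hcm⟩ := h0
    rw [Finset.centerMass_eq_of_sum_1 _ _ hw1] at hcm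
    have hcoord : ∀ i : Fin (k+1), ∑ j ∈ t, w j • z j i = if i = 0 then K else 0 := by
      intro i
      have := congrFun hcm i
      simpa [Finset.sum_apply] using this
    have hcoordsucc : ∀ q : Fin k, ∑ j ∈ t, w j • z j q.succ = 0 := by
      intro q
      rw [hcoord q.succ, if_neg (Fin.succ_ne_zero q)]
    have hch : ∀ j : {x // x ∈ t}, ∃ v : EuclideanSpace 𝕜 (Fin n),
        v ∈ (⊤ : Submodule 𝕜 (EuclideanSpace 𝕜 (Fin n))) ∧ ‖v‖ = 1 ∧
          z j.1 = fun i => (inner 𝕜 v (Matrix.toEuclideanLin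
            ((Fin.cons (Mᴴ * Y) (fun i => Mᴴ * X i) : Fin (k+1) → Matrix (Fin n) (Fin n) 𝕜) i) v) : 𝕜) :=
      fun j => hz j.1 j.2
    choose v _hv1 hv2 hv3 using hch
    have hzj : ∀ j : {x // x ∈ t},
        z j.1 0 = ((‖Matrix.toEuclideanLin M (v j)‖ ^ 2 : ℝ) : 𝕜)
          + ∑ q, c q * z j.1 q.succ := by
      intro j
      simp only [hv3 j, Fin.cons_zero, Fin.cons_succ]
      exact hAy (v j)
    have e1 : ∑ j ∈ t.attach, w j.1 • ((‖Matrix.toEuclideanLin M (v j)‖ ^ 2 : ℝ) : 𝕜) = K := by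
      have e1' : (∑ j ∈ t.attach, w j.1 • ((‖Matrix.toEuclideanLin M (v j)‖ ^ 2 : ℝ) : 𝕜))
          + ∑ j ∈ t.attach, ∑ q, w j.1 • (c q * z j.1 q.succ) = K := by
        calc (∑ j ∈ t.attach, w j.1 • ((‖Matrix.toEuclideanLin M (v j)‖ ^ 2 : ℝ) : 𝕜))
              + ∑ j ∈ t.attach, ∑ q, w j.1 • (c q * z j.1 q.succ)
            = ∑ j ∈ t.attach, (w j.1 • ((‖Matrix.toEuclideanLin M (v j)‖ ^ 2 : ℝ) : 𝕜)
                + ∑ q, w j.1 • (c q * z j.1 q.succ)) := Finset.sum_add_distrib.symm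
          _ = ∑ j ∈ t.attach, w j.1 • z j.1 0 := by
              refine Finset.sum_congr rfl fun j _ => ?_
              rw [hzj j, smul_add, Finset.smul_sum]
          _ = ∑ j ∈ t, w j • z j 0 := Finset.sum_attach t (fun j => w j • z j 0)
          _ = K := by rw [hcoord 0, if_pos rfl]
      have e2 : ∑ j ∈ t.attach, ∑ q, w j.1 • (c q * z j.1 q.succ) = 0 := by
        rw [Finset.sum_comm]
        refine Finset.sum_eq_zero fun q _ => ?_
        have e : ∑ j ∈ t.attach, w j.1 • (c q * z j.1 q.succ)
            = c q * ∑ j ∈ t.attach, w j.1 • z j.1 q.succ := by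
          rw [Finset.mul_sum]
          refine Finset.sum_congr rfl fun j _ => ?_
          rw [RCLike.real_smul_eq_coe_mul, RCLike.real_smul_eq_coe_mul]
          ring
        rw [e, Finset.sum_attach t (fun j => w j • z j q.succ), hcoordsucc q, mul_zero]
      rw [e2, add_zero] at e1'
      exact e1'
    have hreal : ∑ j ∈ t.attach, w j.1 * ‖Matrix.toEuclideanLin M (v j)‖ ^ 2
        = specNorm M ^ 2 := by
      have e3 : ((∑ j ∈ t.attach, w j.1 * ‖Matrix.toEuclideanLin M (v j)‖ ^ 2 : ℝ) : 𝕜)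
          = ((specNorm M ^ 2 : ℝ) : 𝕜) := by
        rw [← hK, ← e1]
        push_cast
        exact Finset.sum_congr rfl fun j _ => (RCLike.real_smul_eq_coe_mul _ _).symm
      exact_mod_cast e3
    have hle : ∀ j : {x // x ∈ t},
        ‖Matrix.toEuclideanLin M (v j)‖ ^ 2 ≤ specNorm M ^ 2 := by
      intro j
      have := hb (v j)
      rw [hv2 j, mul_one] at this
      nlinarith [norm_nonneg (Matrix.toEuclideanLin M (v j))]
    have hsz : ∑ j ∈ t.attach,
        w j.1 * (specNorm M ^ 2 - ‖Matrix.toEuclideanLin M (v j)‖ ^ 2) = 0 := by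
      have : ∑ j ∈ t.attach, w j.1 * (specNorm M ^ 2 - ‖Matrix.toEuclideanLin M (v j)‖ ^ 2)
          = (∑ j ∈ t.attach, w j.1 * specNorm M ^ 2)
            - ∑ j ∈ t.attach, w j.1 * ‖Matrix.toEuclideanLin M (v j)‖ ^ 2 := by
        rw [← Finset.sum_sub_distrib]
        exact Finset.sum_congr rfl fun j _ => by ring
      rw [this, ← Finset.sum_mul, Finset.sum_attach t w, hw1, one_mul, hreal, sub_self]
    have hmaxmem : ∀ j : {x // x ∈ t}, w j.1 ≠ 0 → v j ∈ maxRSV M := by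
      intro j hwj
      have hterm := (Finset.sum_eq_zero_iff_of_nonneg
        (fun j' _ => mul_nonneg (hw0 j'.1 j'.2)
          (by linarith [hle j']))).mp hsz j (Finset.mem_attach t j)
      have hr : ‖Matrix.toEuclideanLin M (v j)‖ ^ 2 = specNorm M ^ 2 := by
        rcases mul_eq_zero.mp hterm with h | h
        · exact absurd h hwj
        · linarith
      have hnorm : ‖Matrix.toEuclideanLin M (v j)‖ = specNorm M := by
        have := congrArg Real.sqrt hr
        rwa [Real.sqrt_sq (norm_nonneg _), Real.sqrt_sq hσ0] at this
      exact Submodule.subset_span ⟨hv2 j, hnorm⟩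
    set t' := t.attach.filter (fun j => w j.1 ≠ 0) with ht'
    have hsum' : ∑ j ∈ t', w j.1 = 1 := by
      rw [ht', Finset.sum_filter_of_ne (fun j _ h => h), Finset.sum_attach t w]
      exact hw1
    have hkmem : ∀ j ∈ t', (fun q : Fin k => z j.1 q.succ)
        ∈ kField (fun i => Mᴴ * X i) (maxRSV M) := by
      intro j hj
      have hwj : w j.1 ≠ 0 := (Finset.mem_filter.mp hj).2
      exact ⟨v j, hmaxmem j hwj, hv2 j, funext fun q => by
        simp only [hv3 j, Fin.cons_succ]⟩
    have hmem := Finset.centerMass_mem_convexHull t'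
      (fun j _ => hw0 j.1 j.2) (by rw [hsum']; norm_num) hkmem
    rw [Finset.centerMass_eq_of_sum_1 _ _ hsum'] at hmem
    have heq : (0 : Fin k → 𝕜)
        = ∑ j ∈ t', (fun j' : {x // x ∈ t} => w j'.1) j • (fun q : Fin k => z j.1 q.succ) := by
      funext q
      rw [Finset.sum_apply]
      symm
      calc ∑ j ∈ t', w j.1 • z j.1 q.succ
          = ∑ j ∈ t.attach, w j.1 • z j.1 q.succ := by
            rw [ht']
            refine Finset.sum_filter_of_ne fun j _ h => ?_
            intro hw
            exact h (by rw [hw, zero_smul])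
        _ = ∑ j ∈ t, w j • z j q.succ := Finset.sum_attach t (fun j => w j • z j q.succ)
        _ = 0 := hcoordsucc q
    rw [heq]
    exact hmem
end
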